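/- There exists a constant K such that every finite Eulerian set M ⊆ 𝔽₂ⁿ \ {0} can be partitioned into at most K · 2^{rank(M)}/(rank(M) + 1) circuits; i.e., c(M) = O(2^{rank(M)}/(rank(M)+1)). -/

import Mathlib

open Finset

/-- A circuit: a minimal nonempty subset of the ambient group minus `{0}` with zero sum. -/
def IsCircuit {V : Type*} [AddCommGroup V] [DecidableEq V] (C : Finset V) : Prop :=
  C.Nonempty ∧ (0 : V) ∉ C ∧ ∑ x ∈ C, x = 0 ∧
    ∀ D ⊆ C, D.Nonempty → ∑ x ∈ D, x = 0 → D = C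
/-- rank: maximum size of a linearly independent subset of `M`. -/
noncomputable def rk {n : ℕ} (M : Finset (Fin n → ZMod 2)) : ℕ :=
  sSup {k : ℕ | ∃ s ⊆ M, s.card = k ∧
    LinearIndependent (ZMod 2) (fun x : s => (x : Fin n → ZMod 2))}
/-- `𝒞` is a partition of `M` into pairwise disjoint circuits. -/
def IsCircuitPartition {V : Type*} [AddCommGroup V] [DecidableEq V]
    (M : Finset V) (𝒞 : Finset (Finset V)) : Prop :=
  (∀ C ∈ 𝒞, IsCircuit C) ∧
  (∀ C ∈ 𝒞, ∀ D ∈ 𝒞, C ≠ D → Disjoint C D) ∧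
  𝒞.biUnion id = M

namespace CircuitProof

variable {n : ℕ}

/-- char 2 basics -/
lemma add_self (x : Fin n → ZMod 2) : x + x = 0 := by
  funext i
  exact CharTwo.add_self_eq_zero (x i)

lemma add_eq_zero_iff {x y : Fin n → ZMod 2} : x + y = 0 ↔ x = y := by
  constructor
  · intro h
    have := congrArg (· + y) h
    simpa [add_assoc, add_self y] using this
  · rintro rfl; exact add_self x

/-- the set defining rk -/
def rset (M : Finset (Fin n → ZMod 2)) : Set ℕ :=
  {k : ℕ | ∃ s ⊆ M, s.card = k ∧
    LinearIndependent (ZMod 2) (fun x : s => (x : Fin n → ZMod 2))}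

lemma rk_eq (M : Finset (Fin n → ZMod 2)) : rk M = sSup (rset M) := rfl

lemma rset_le_card {M : Finset (Fin n → ZMod 2)} {k : ℕ} (h : k ∈ rset M) : k ≤ M.card := by
  obtain ⟨s, hs, rfl, -⟩ := h
  exact Finset.card_le_card hs

lemma rset_bdd (M : Finset (Fin n → ZMod 2)) : BddAbove (rset M) :=
  ⟨M.card, fun _ h => rset_le_card h⟩

lemma zero_mem_rset (M : Finset (Fin n → ZMod 2)) : 0 ∈ rset M := by
  refine ⟨∅, Finset.empty_subset _, Finset.card_empty, ?_⟩
  haveI : IsEmpty ((∅ : Finset (Fin n → ZMod 2)) : Type _) := by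
    simp [Finset.isEmpty_coe_sort]
    exact ⟨fun x => x.2⟩
  exact linearIndependent_empty_type

lemma rk_mono {M N : Finset (Fin n → ZMod 2)} (h : M ⊆ N) : rk M ≤ rk N := by
  apply csSup_le ⟨0, zero_mem_rset M⟩
  intro k hk
  obtain ⟨s, hs, hc, hi⟩ := hk
  exact le_csSup (rset_bdd N) ⟨s, hs.trans h, hc, hi⟩

open Submodule Module in
lemma finrank_le_rk (M : Finset (Fin n → ZMod 2)) :
    finrank (ZMod 2) (span (ZMod 2) (M : Set (Fin n → ZMod 2))) ≤ rk M := by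
  classical
  obtain ⟨b, hb, hspan, hind⟩ := exists_linearIndependent (ZMod 2) (M : Set (Fin n → ZMod 2))
  have hbfin : b.Finite := M.finite_toSet.subset hb
  haveI : Fintype b := hbfin.fintype
  have hcard : finrank (ZMod 2) (span (ZMod 2) b) = b.toFinset.card :=
    finrank_span_set_eq_card hind
  have hmem : b.toFinset.card ∈ rset M := by
    refine ⟨b.toFinset, ?_, rfl, ?_⟩
    · intro x hx
      have : x ∈ b := by simpa using hx
      exact hb this
    · have hsets : ((b.toFinset : Finset (Fin n → ZMod 2)) : Set (Fin n → ZMod 2)) = b := by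
        simp
      let e : ((b.toFinset : Finset (Fin n → ZMod 2)) : Type _) ≃ b :=
        Equiv.setCongr hsets
      have : (fun x : b.toFinset => (x : Fin n → ZMod 2)) = (fun x : b => (x : Fin n → ZMod 2)) ∘ e := by
        funext x; rfl
      rw [this]
      exact hind.comp e e.injective
  calc finrank (ZMod 2) (span (ZMod 2) (M : Set (Fin n → ZMod 2)))
      = b.toFinset.card := by rw [← hspan, hcard]
    _ ≤ rk M := le_csSup (rset_bdd M) hmem

open Submodule Module in
lemma card_le_two_pow_rk {M T : Finset (Fin n → ZMod 2)}
    (hT : ∀ x ∈ T, x ∈ span (ZMod 2) (M : Set (Fin n → ZMod 2))) :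
    T.card ≤ 2 ^ rk M := by
  classical
  haveI : Fintype (span (ZMod 2) (M : Set (Fin n → ZMod 2))) := Fintype.ofFinite _
  have h1 : T.card ≤ Fintype.card (span (ZMod 2) (M : Set (Fin n → ZMod 2))) := by
    rw [← Fintype.card_coe T]
    exact Fintype.card_le_of_injective
      (fun x => ⟨x.1, hT x.1 x.2⟩)
      (fun a b hab => Subtype.ext (by have h := congrArg Subtype.val hab; exact h))
  have h2 : Fintype.card (span (ZMod 2) (M : Set (Fin n → ZMod 2)))
      = 2 ^ finrank (ZMod 2) (span (ZMod 2) (M : Set (Fin n → ZMod 2))) := by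
    have := card_eq_pow_finrank (K := ZMod 2)
      (V := span (ZMod 2) (M : Set (Fin n → ZMod 2)))
    simpa [ZMod.card] using this
  calc T.card ≤ 2 ^ finrank (ZMod 2) (span (ZMod 2) (M : Set (Fin n → ZMod 2))) := by
        rw [← h2]; exact h1
    _ ≤ 2 ^ rk M := Nat.pow_le_pow_right (by norm_num) (finrank_le_rk M)

lemma card_M_le_two_pow_rk (M : Finset (Fin n → ZMod 2)) : M.card ≤ 2 ^ rk M :=
  card_le_two_pow_rk (fun x hx => Submodule.subset_span hx)

/-- every circuit has at least 3 elements -/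
lemma circuit_card_ge_three {C : Finset (Fin n → ZMod 2)} (hC : IsCircuit C) : 3 ≤ C.card := by
  obtain ⟨hne, h0, hsum, -⟩ := hC
  obtain ⟨x, hx⟩ := hne
  have hc0 : C.card ≠ 0 := Finset.card_ne_zero_of_mem hx
  have hc1 : C.card ≠ 1 := by
    intro h1
    obtain ⟨y, hy⟩ := Finset.card_eq_one.mp h1
    subst hy
    simp at hsum
    subst hsum
    simp at h0
  have hc2 : C.card ≠ 2 := by
    intro h2
    obtain ⟨x', y', hxy, hC⟩ := Finset.card_eq_two.mp h2
    subst hC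
    rw [Finset.sum_pair hxy] at hsum
    exact hxy (add_eq_zero_iff.mp hsum)
  omega

/-- adding a circuit to a partition of M \ C -/
lemma insert_partition {M C : Finset (Fin n → ZMod 2)} {𝒞 : Finset (Finset (Fin n → ZMod 2))}
    (hC : IsCircuit C) (hCM : C ⊆ M) (h𝒞 : IsCircuitPartition (M \ C) 𝒞) :
    IsCircuitPartition M (insert C 𝒞) := by
  obtain ⟨hcirc, hdisj, hunion⟩ := h𝒞
  have hsub : ∀ D ∈ 𝒞, D ⊆ M \ C := by
    intro D hD
    rw [← hunion]
    exact Finset.subset_biUnion_of_mem id hD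
  refine ⟨?_, ?_, ?_⟩
  · intro D hD
    rcases Finset.mem_insert.mp hD with rfl | hD
    · exact hC
    · exact hcirc D hD
  · intro D₁ h₁ D₂ h₂ hne
    rcases Finset.mem_insert.mp h₁ with h₁e | h₁m <;>
      rcases Finset.mem_insert.mp h₂ with h₂e | h₂m
    · exact absurd (h₁e.trans h₂e.symm) hne
    · subst h₁e
      rw [Finset.disjoint_left]
      intro x hx hx2
      exact (Finset.mem_sdiff.mp (hsub _ h₂m hx2)).2 hx
    · subst h₂e
      rw [Finset.disjoint_left]
      intro x hx hx2
      exact (Finset.mem_sdiff.mp (hsub _ h₁m hx)).2 hx2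
    · exact hdisj _ h₁m _ h₂m hne
  · rw [Finset.biUnion_insert, hunion]
    simpa using Finset.union_sdiff_of_subset hCM

/-- existence of a circuit partition, with the trivial bound -/
lemma exists_partition : ∀ (a : ℕ) (M : Finset (Fin n → ZMod 2)), M.card = a →
    (0 : Fin n → ZMod 2) ∉ M → ∑ x ∈ M, x = 0 →
    ∃ 𝒞, IsCircuitPartition M 𝒞 ∧ 3 * 𝒞.card ≤ M.card := by
  intro a
  induction a using Nat.strong_induction_on with
  | _ a IH =>
    intro M hcard h0 hsum
    rcases Finset.eq_empty_or_nonempty M with rfl | hne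
    · exact ⟨∅, ⟨by simp, by simp, by simp⟩, by simp⟩
    · classical
      -- take a zero-sum nonempty subset of minimum cardinality
      have hTne : M ∈ M.powerset.filter (fun D => D.Nonempty ∧ ∑ x ∈ D, x = 0) := by
        simp [hne, hsum]
      obtain ⟨C, hCmem, hCmin⟩ :=
        Finset.exists_min_image _ Finset.card ⟨M, hTne⟩
      simp only [Finset.mem_filter, Finset.mem_powerset] at hCmem
      obtain ⟨hCM, hCne, hCsum⟩ := hCmem
      have hCcirc : IsCircuit C := by
        refine ⟨hCne, fun h => h0 (hCM h), hCsum, ?_⟩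
        intro D hD hDne hDsum
        have hDmem : D ∈ M.powerset.filter (fun D => D.Nonempty ∧ ∑ x ∈ D, x = 0) := by
          simp [Finset.mem_powerset.mpr (hD.trans hCM), hDne, hDsum]
        exact (Finset.eq_of_subset_of_card_le hD (hCmin D hDmem)).symm ▸ rfl
      -- recurse
      have hM'card : (M \ C).card = M.card - C.card := Finset.card_sdiff_of_subset hCM
      have hCpos : 0 < C.card := Finset.card_pos.mpr hCne
      have hlt : (M \ C).card < a := by
        rw [hM'card, ← hcard]
        have := Finset.card_le_card hCM
        omega
      have hM'sum : ∑ x ∈ M \ C, x = 0 := by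
        have h := Finset.sum_sdiff hCM (f := fun x => x)
        rw [hCsum, hsum] at h
        simpa using h
      obtain ⟨𝒞', hpart', hcount'⟩ := IH _ hlt (M \ C) rfl
        (fun h => h0 (Finset.mem_sdiff.mp h).1) hM'sum
      refine ⟨insert C 𝒞', insert_partition hCcirc hCM hpart', ?_⟩
      have h3 : 3 ≤ C.card := circuit_card_ge_three hCcirc
      have hins : (insert C 𝒞').card ≤ 𝒞'.card + 1 := Finset.card_insert_le _ _
      have hcle : C.card ≤ M.card := Finset.card_le_card hCM
      rw [hM'card] at hcount'
      omega

/-- numeric helpers -/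
lemma mono2 {m N : ℕ} (h : m ≤ N) : 2 ^ m * (N + 1) ≤ 2 ^ N * (m + 1) := by
  obtain ⟨d, rfl⟩ := Nat.exists_eq_add_of_le h
  have h1 : d + 1 ≤ 2 ^ d := Nat.lt_two_pow_self
  have h2 : m + d + 1 ≤ (d + 1) * (m + 1) := by nlinarith
  calc 2 ^ m * (m + d + 1) ≤ 2 ^ m * ((d + 1) * (m + 1)) := Nat.mul_le_mul_left _ h2
    _ ≤ 2 ^ m * (2 ^ d * (m + 1)) := Nat.mul_le_mul_left _ (Nat.mul_le_mul_right _ h1)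
    _ = 2 ^ (m + d) * (m + 1) := by rw [pow_add]; ring

lemma q_helper : ∀ q : ℕ, 12 ≤ q → 4 * q + 4 ≤ 2 ^ q := by
  intro q hq
  induction q, hq using Nat.le_induction with
  | base => norm_num
  | succ q hq IH =>
    have h4 : 4 ≤ 2 ^ q := le_trans (by norm_num) IH
    have : 2 ^ (q + 1) = 2 ^ q + 2 ^ q := by ring
    omega

lemma sum_erase_eq {ι : Type*} [DecidableEq ι] {s : Finset ι} {f : ι → (Fin n → ZMod 2)} {u : ι}
    (hu : u ∈ s) (hsum : ∑ x ∈ s, f x = 0) :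
    f u = ∑ x ∈ s.erase u, f x := by
  have h := Finset.sum_erase_add s f hu
  rw [hsum] at h
  exact (add_eq_zero_iff.mp h).symm

/-- If every element of `T ⊆ M^ι` is determined by its coordinates away from two indices,
then `T` has at most `|M|^(|ι|-2)` elements. -/
lemma drop2 {k : ℕ} {M : Finset (Fin n → ZMod 2)}
    (T : Finset ((Fin k ⊕ Fin k) → (Fin n → ZMod 2)))
    (hT : T ⊆ Fintype.piFinset (fun _ => M))
    (s u : Fin k ⊕ Fin k) (hsu : s ≠ u)
    (hdet : ∀ f ∈ T, ∀ g ∈ T, (∀ x, x ≠ s → x ≠ u → f x = g x) → f = g) :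
    T.card ≤ M.card ^ (k + k - 2) := by
  classical
  set sc : Finset (Fin k ⊕ Fin k) := (univ \ {s, u}) with hsc
  have h2 : ({s, u} : Finset (Fin k ⊕ Fin k)).card = 2 := by
    rw [Finset.card_insert_of_notMem (by simpa using hsu), Finset.card_singleton]
  have hsccard : sc.card = k + k - 2 := by
    rw [hsc, Finset.card_sdiff_of_subset (Finset.subset_univ _), h2, Finset.card_univ]
    simp
  have hmem : ∀ f ∈ T, (fun x : sc => f x.1) ∈ Fintype.piFinset (fun _ : sc => M) := by
    intro f hf
    rw [Fintype.mem_piFinset]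
    intro x
    exact Fintype.mem_piFinset.mp (hT hf) x.1
  have hinj : Set.InjOn (fun f : (Fin k ⊕ Fin k) → (Fin n → ZMod 2) => (fun x : sc => f x.1)) ↑T := by
    intro f hf g hg h
    refine hdet f hf g hg ?_
    intro x hxs hxu
    have hx : x ∈ sc := by
      rw [hsc]; simp [hxs, hxu]
    exact congrFun h ⟨x, hx⟩
  calc T.card ≤ (Fintype.piFinset (fun _ : sc => M)).card :=
        Finset.card_le_card_of_injOn _ hmem hinj
    _ = M.card ^ (k + k - 2) := by
        rw [Fintype.card_piFinset]
        simp [hsccard]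



lemma fiber_card {M : Finset (Fin n → ZMod 2)} {k : ℕ} (v : Fin n → ZMod 2) :
    (((Fintype.piFinset (fun _ : Fin k ⊕ Fin k => M)).filter (fun f => ∑ x, f x = 0)).filter
       (fun f => (∑ i, f (Sum.inl i)) = v)).card
    = ((Fintype.piFinset (fun _ : Fin k => M)).filter (fun f => ∑ i, f i = v)).card *
      ((Fintype.piFinset (fun _ : Fin k => M)).filter (fun f => ∑ i, f i = v)).card := by
  classical
  rw [← Finset.card_product]
  apply Finset.card_nbij'
    (i := fun f => ((fun i => f (Sum.inl i)), (fun i => f (Sum.inr i))))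
    (j := fun p => Sum.elim p.1 p.2)
  · -- hi
    intro f hf
    rw [Finset.mem_coe, Finset.mem_filter] at hf
    obtain ⟨hfS, hfv⟩ := hf
    rw [Finset.mem_filter] at hfS
    obtain ⟨hfW, hfsum⟩ := hfS
    have hsplit : (∑ i, f (Sum.inl i)) + (∑ i, f (Sum.inr i)) = 0 := by
      rw [← Fintype.sum_sum_type]
      exact hfsum
    have heq : (∑ i, f (Sum.inl i)) = (∑ i, f (Sum.inr i)) := add_eq_zero_iff.mp hsplit
    rw [Finset.mem_coe, Finset.mem_product]
    constructor
    · rw [Finset.mem_filter]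
      refine ⟨?_, hfv⟩
      rw [Fintype.mem_piFinset]
      intro i
      exact Fintype.mem_piFinset.mp hfW (Sum.inl i)
    · rw [Finset.mem_filter]
      refine ⟨?_, by rw [← heq]; exact hfv⟩
      rw [Fintype.mem_piFinset]
      intro i
      exact Fintype.mem_piFinset.mp hfW (Sum.inr i)
  · -- hj
    intro p hp
    rw [Finset.mem_coe, Finset.mem_product] at hp
    obtain ⟨hp1, hp2⟩ := hp
    rw [Finset.mem_filter] at hp1 hp2
    obtain ⟨hp1W, hv1⟩ := hp1
    obtain ⟨hp2W, hv2⟩ := hp2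
    rw [Finset.mem_coe, Finset.mem_filter]
    constructor
    · rw [Finset.mem_filter]
      constructor
      · rw [Fintype.mem_piFinset]
        intro x
        cases x with
        | inl i => exact Fintype.mem_piFinset.mp hp1W i
        | inr i => exact Fintype.mem_piFinset.mp hp2W i
      · rw [Fintype.sum_sum_type]
        simp only [Sum.elim_inl, Sum.elim_inr]
        rw [hv1, hv2]
        exact add_self v
    · simpa using hv1
  · intro f _
    funext x
    cases x <;> rfl
  · intro p _
    apply Prod.ext <;> rfl

open Submodule in
lemma L3a {M : Finset (Fin n → ZMod 2)} (k : ℕ) (hbound : ∀ T : Finset (Fin n → ZMod 2),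
      (∀ x ∈ T, x ∈ span (ZMod 2) (M : Set (Fin n → ZMod 2))) → T.card ≤ 2 ^ rk M) :
    M.card ^ (k + k) ≤ 2 ^ rk M *
      ((Fintype.piFinset (fun _ : Fin k ⊕ Fin k => M)).filter
        (fun f => ∑ x, f x = 0)).card := by
  classical
  have hXcard : (Fintype.piFinset (fun _ : Fin k => M)).card = M.card ^ k := by
    rw [Fintype.card_piFinset]
    simp
  have hsum_g : ∑ v ∈ (Fintype.piFinset (fun _ : Fin k => M)).image (fun f => ∑ i, f i),
      ((Fintype.piFinset (fun _ : Fin k => M)).filter (fun f => ∑ i, f i = v)).card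
      = M.card ^ k := by
    rw [← hXcard]
    exact (Finset.card_eq_sum_card_fiberwise
      (fun f hf => Finset.mem_image_of_mem _ hf)).symm
  have hfibmem : ∀ f ∈ (Fintype.piFinset (fun _ : Fin k ⊕ Fin k => M)).filter
      (fun f => ∑ x, f x = 0),
      (∑ i, f (Sum.inl i)) ∈ (Fintype.piFinset (fun _ : Fin k => M)).image
        (fun f => ∑ i, f i) := by
    intro f hf
    have hfW := (Finset.mem_filter.mp hf).1
    have hmem : (fun i => f (Sum.inl i)) ∈ Fintype.piFinset (fun _ : Fin k => M) := by
      rw [Fintype.mem_piFinset]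
      intro i
      exact Fintype.mem_piFinset.mp hfW (Sum.inl i)
    exact Finset.mem_image_of_mem _ hmem
  have hScard : ((Fintype.piFinset (fun _ : Fin k ⊕ Fin k => M)).filter
        (fun f => ∑ x, f x = 0)).card
      = ∑ v ∈ (Fintype.piFinset (fun _ : Fin k => M)).image (fun f => ∑ i, f i),
        ((Fintype.piFinset (fun _ : Fin k => M)).filter (fun f => ∑ i, f i = v)).card *
        ((Fintype.piFinset (fun _ : Fin k => M)).filter (fun f => ∑ i, f i = v)).card := by
    rw [Finset.card_eq_sum_card_fiberwise hfibmem]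
    exact Finset.sum_congr rfl (fun v _ => fiber_card v)
  -- Cauchy-Schwarz over ℤ
  set I₀ := (Fintype.piFinset (fun _ : Fin k => M)).image (fun f => ∑ i, f i) with hI
  set g : (Fin n → ZMod 2) → ℕ :=
    fun v => ((Fintype.piFinset (fun _ : Fin k => M)).filter (fun f => ∑ i, f i = v)).card
    with hg
  have hCS : ((M.card : ℤ) ^ k) ^ 2 ≤ (I₀.card : ℤ) * ∑ v ∈ I₀, (g v : ℤ) ^ 2 := by
    have h := sq_sum_le_card_mul_sum_sq (s := I₀) (f := fun v => (g v : ℤ))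
    calc ((M.card : ℤ) ^ k) ^ 2 = (∑ v ∈ I₀, (g v : ℤ)) ^ 2 := by
          rw [← Nat.cast_sum, hsum_g, Nat.cast_pow]
      _ ≤ (I₀.card : ℤ) * ∑ v ∈ I₀, (g v : ℤ) ^ 2 := h
  have hI₀le : I₀.card ≤ 2 ^ rk M := by
    apply hbound
    intro v hv
    rw [hI] at hv
    obtain ⟨f, hf, rfl⟩ := Finset.mem_image.mp hv
    apply Submodule.sum_mem
    intro i _
    exact Submodule.subset_span (by simpa using Fintype.mem_piFinset.mp hf i)
  have hcastle : (I₀.card : ℤ) ≤ (2 : ℤ) ^ rk M := by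
    have h := (Nat.cast_le (α := ℤ)).mpr hI₀le
    rw [Nat.cast_pow, Nat.cast_ofNat] at h
    exact h
  have hstep1 : (I₀.card : ℤ) * ∑ v ∈ I₀, (g v : ℤ) ^ 2
      ≤ (2 : ℤ) ^ rk M * ∑ v ∈ I₀, (g v : ℤ) ^ 2 := by
    apply mul_le_mul_of_nonneg_right hcastle
    exact Finset.sum_nonneg fun v _ => sq_nonneg _
  have hSsum : ((((Fintype.piFinset (fun _ : Fin k ⊕ Fin k => M)).filter
        (fun f => ∑ x, f x = 0)).card : ℤ)) = ∑ v ∈ I₀, (g v : ℤ) ^ 2 := by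
    rw [hScard, Nat.cast_sum]
    exact Finset.sum_congr rfl (fun v _ => by rw [Nat.cast_mul, sq])
  refine (Nat.cast_le (α := ℤ)).mp ?_
  rw [Nat.cast_pow, Nat.cast_mul, Nat.cast_pow, Nat.cast_ofNat, hSsum]
  calc (M.card : ℤ) ^ (k + k) = ((M.card : ℤ) ^ k) ^ 2 := by ring
    _ ≤ (I₀.card : ℤ) * ∑ v ∈ I₀, (g v : ℤ) ^ 2 := hCS
    _ ≤ (2 : ℤ) ^ rk M * ∑ v ∈ I₀, (g v : ℤ) ^ 2 := hstep1

section L3bc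
variable {M : Finset (Fin n → ZMod 2)} {k : ℕ}

lemma L3b (hk : 2 ≤ k) (s t : Fin k ⊕ Fin k) (hst : s ≠ t) :
    (((Fintype.piFinset (fun _ : Fin k ⊕ Fin k => M)).filter
        (fun f => ∑ x, f x = 0)).filter (fun f => f s = f t)).card
      ≤ M.card ^ (k + k - 2) := by
  classical
  set S := (Fintype.piFinset (fun _ : Fin k ⊕ Fin k => M)).filter
      (fun f => ∑ x, f x = 0) with hS
  -- find u distinct from s, t
  have hucand : ((univ : Finset (Fin k ⊕ Fin k)) \ {s, t}).Nonempty := by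
    rw [← Finset.card_pos, Finset.card_sdiff_of_subset (Finset.subset_univ _), Finset.card_univ]
    have h2 : ({s, t} : Finset (Fin k ⊕ Fin k)).card ≤ 2 := by
      apply le_trans (Finset.card_insert_le _ _)
      simp
    have h4 : 4 ≤ Fintype.card (Fin k ⊕ Fin k) := by
      simp only [Fintype.card_sum, Fintype.card_fin]
      omega
    omega
  obtain ⟨u, hu⟩ := hucand
  have hu' : u ≠ s ∧ u ≠ t := by
    rw [Finset.mem_sdiff] at hu
    constructor <;> intro h <;> apply hu.2 <;> simp [h]
  apply drop2 _ (fun f hf => (Finset.mem_filter.mp ((Finset.filter_subset _ _) hf)).1)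
    s u (Ne.symm hu'.1)
  intro f hf g hg hagree
  rw [Finset.mem_filter] at hf hg
  obtain ⟨hfS, hfst⟩ := hf
  obtain ⟨hgS, hgst⟩ := hg
  have hfsum : ∑ x, f x = 0 := (Finset.mem_filter.mp hfS).2
  have hgsum : ∑ x, g x = 0 := (Finset.mem_filter.mp hgS).2
  have hts : t ≠ s := hst.symm
  have hfgs : f s = g s := by
    rw [hfst, hgst]
    exact hagree t hts (Ne.symm hu'.2)
  have hagree' : ∀ x, x ≠ u → f x = g x := by
    intro x hxu
    by_cases hxs : x = s
    · rw [hxs]; exact hfgs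
    · exact hagree x hxs hxu
  have hfu : f u = g u := by
    have h1 : f u = ∑ x ∈ univ.erase u, f x :=
      sum_erase_eq (Finset.mem_univ u) hfsum
    have h2 : g u = ∑ x ∈ univ.erase u, g x :=
      sum_erase_eq (Finset.mem_univ u) hgsum
    rw [h1, h2]
    exact Finset.sum_congr rfl (fun x hx => hagree' x (Finset.mem_erase.mp hx).1)
  funext x
  by_cases hxu : x = u
  · rw [hxu]; exact hfu
  · exact hagree' x hxu

lemma L3c (A : Finset (Fin k ⊕ Fin k)) (hA : A.Nonempty) (hAu : A ≠ univ) :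
    (((Fintype.piFinset (fun _ : Fin k ⊕ Fin k => M)).filter
        (fun f => ∑ x, f x = 0)).filter (fun f => ∑ x ∈ A, f x = 0)).card
      ≤ M.card ^ (k + k - 2) := by
  classical
  obtain ⟨s, hs⟩ := hA
  have : ∃ u, u ∉ A := by
    by_contra h
    push_neg at h
    exact hAu (Finset.eq_univ_iff_forall.mpr h)
  obtain ⟨u, hu⟩ := this
  have hsu : s ≠ u := fun h => hu (h ▸ hs)
  apply drop2 _ (fun f hf => (Finset.mem_filter.mp ((Finset.filter_subset _ _) hf)).1)
    s u hsu
  intro f hf g hg hagree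
  rw [Finset.mem_filter] at hf hg
  obtain ⟨hfS, hfA⟩ := hf
  obtain ⟨hgS, hgA⟩ := hg
  have hfsum : ∑ x, f x = 0 := (Finset.mem_filter.mp hfS).2
  have hgsum : ∑ x, g x = 0 := (Finset.mem_filter.mp hgS).2
  have hfgs : f s = g s := by
    have h1 : f s = ∑ x ∈ A.erase s, f x := sum_erase_eq hs hfA
    have h2 : g s = ∑ x ∈ A.erase s, g x := sum_erase_eq hs hgA
    rw [h1, h2]
    refine Finset.sum_congr rfl (fun x hx => ?_)
    have hxA := Finset.mem_of_mem_erase hx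
    exact hagree x (Finset.mem_erase.mp hx).1 (fun h => hu (h ▸ hxA))
  have hagree' : ∀ x, x ≠ u → f x = g x := by
    intro x hxu
    by_cases hxs : x = s
    · rw [hxs]; exact hfgs
    · exact hagree x hxs hxu
  have hfu : f u = g u := by
    have h1 : f u = ∑ x ∈ univ.erase u, f x :=
      sum_erase_eq (Finset.mem_univ u) hfsum
    have h2 : g u = ∑ x ∈ univ.erase u, g x :=
      sum_erase_eq (Finset.mem_univ u) hgsum
    rw [h1, h2]
    exact Finset.sum_congr rfl (fun x hx => hagree' x (Finset.mem_erase.mp hx).1)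
  funext x
  by_cases hxu : x = u
  · rw [hxu]; exact hfu
  · exact hagree' x hxu

end L3bc
open Submodule in
lemma exists_big_circuit {M : Finset (Fin n → ZMod 2)} (h0 : (0 : Fin n → ZMod 2) ∉ M)
    (hbound : ∀ T : Finset (Fin n → ZMod 2),
      (∀ x ∈ T, x ∈ span (ZMod 2) (M : Set (Fin n → ZMod 2))) → T.card ≤ 2 ^ rk M)
    (k : ℕ) (hk : 2 ≤ k)
    (hbig : (4 * k ^ 2 + 2 ^ (k + k)) * 2 ^ rk M < M.card ^ 2) :
    ∃ C : Finset (Fin n → ZMod 2), C ⊆ M ∧ IsCircuit C ∧ C.card = k + k := by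
  classical
  set a := M.card with ha
  set S := (Fintype.piFinset (fun _ : Fin k ⊕ Fin k => M)).filter
      (fun f => ∑ x, f x = 0) with hS
  have hSlow : a ^ (k + k) ≤ 2 ^ rk M * S.card := L3a k hbound
  have hapos : 0 < a := by
    rcases Nat.eq_zero_or_pos a with h | h
    · rw [h] at hbig
      simp at hbig
    · exact h
  have htpos : 0 < a ^ (k + k - 2) := Nat.pow_pos hapos
  -- non-injective part
  set NIset := S.filter (fun f => ¬ Function.Injective f) with hNI
  have hNIcard : NIset.card ≤ (4 * k ^ 2) * a ^ (k + k - 2) := by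
    have hsub : NIset ⊆ (univ.offDiag).biUnion
        (fun p => S.filter (fun f => f p.1 = f p.2)) := by
      intro f hf
      rw [hNI, Finset.mem_filter] at hf
      obtain ⟨hfS, hfni⟩ := hf
      obtain ⟨x, y, hfxy, hxy⟩ := Function.not_injective_iff.mp hfni
      refine Finset.mem_biUnion.mpr ⟨(x, y), ?_, ?_⟩
      · exact Finset.mem_offDiag.mpr ⟨Finset.mem_univ _, Finset.mem_univ _, hxy⟩
      · exact Finset.mem_filter.mpr ⟨hfS, hfxy⟩
    calc NIset.card ≤ ((univ.offDiag).biUnion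
          (fun p => S.filter (fun f => f p.1 = f p.2))).card := Finset.card_le_card hsub
      _ ≤ ∑ p ∈ univ.offDiag, (S.filter (fun f => f p.1 = f p.2)).card :=
          Finset.card_biUnion_le
      _ ≤ ∑ _p ∈ (univ : Finset (Fin k ⊕ Fin k)).offDiag, a ^ (k + k - 2) := by
          apply Finset.sum_le_sum
          intro p hp
          exact L3b hk p.1 p.2 (Finset.mem_offDiag.mp hp).2.2
      _ = (univ : Finset (Fin k ⊕ Fin k)).offDiag.card * a ^ (k + k - 2) := by
          rw [Finset.sum_const, smul_eq_mul]
      _ ≤ (4 * k ^ 2) * a ^ (k + k - 2) := by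
          apply Nat.mul_le_mul_right
          calc (univ : Finset (Fin k ⊕ Fin k)).offDiag.card
              ≤ (univ : Finset (Fin k ⊕ Fin k)).card * (univ : Finset (Fin k ⊕ Fin k)).card := by
                rw [Finset.offDiag_card]
                omega
            _ = 4 * k ^ 2 := by
                rw [Finset.card_univ]
                simp only [Fintype.card_sum, Fintype.card_fin]
                ring
  -- the "contains a proper zero-sum subset" part
  set ℬ := (univ : Finset (Fin k ⊕ Fin k)).powerset.filter
      (fun A => A.Nonempty ∧ A ≠ univ) with hℬ
  set Bset := ℬ.biUnion (fun A => S.filter (fun f => ∑ x ∈ A, f x = 0)) with hB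
  have hBcard : Bset.card ≤ 2 ^ (k + k) * a ^ (k + k - 2) := by
    calc Bset.card ≤ ∑ A ∈ ℬ, (S.filter (fun f => ∑ x ∈ A, f x = 0)).card :=
          Finset.card_biUnion_le
      _ ≤ ∑ _A ∈ ℬ, a ^ (k + k - 2) := by
          apply Finset.sum_le_sum
          intro A hA
          rw [hℬ, Finset.mem_filter] at hA
          exact L3c A hA.2.1 hA.2.2
      _ = ℬ.card * a ^ (k + k - 2) := by rw [Finset.sum_const, smul_eq_mul]
      _ ≤ 2 ^ (k + k) * a ^ (k + k - 2) := by
          apply Nat.mul_le_mul_right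
          calc ℬ.card ≤ (univ : Finset (Fin k ⊕ Fin k)).powerset.card :=
                Finset.card_le_card (Finset.filter_subset _ _)
            _ = 2 ^ (k + k) := by
                rw [Finset.card_powerset, Finset.card_univ]
                simp [Fintype.card_sum]
  -- totals
  have htot : NIset.card + Bset.card < S.card := by
    have h1 : NIset.card + Bset.card ≤ (4 * k ^ 2 + 2 ^ (k + k)) * a ^ (k + k - 2) := by
      rw [add_mul]
      omega
    have h2 : (4 * k ^ 2 + 2 ^ (k + k)) * 2 ^ rk M * a ^ (k + k - 2) < a ^ 2 * a ^ (k + k - 2) :=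
      Nat.mul_lt_mul_of_lt_of_le hbig (le_refl _) htpos
    have h3 : a ^ 2 * a ^ (k + k - 2) = a ^ (k + k) := by
      rw [← pow_add]
      congr 1
      omega
    have h4 : 2 ^ rk M * (NIset.card + Bset.card) < 2 ^ rk M * S.card := by
      calc 2 ^ rk M * (NIset.card + Bset.card)
          ≤ 2 ^ rk M * ((4 * k ^ 2 + 2 ^ (k + k)) * a ^ (k + k - 2)) :=
            Nat.mul_le_mul_left _ h1
        _ = (4 * k ^ 2 + 2 ^ (k + k)) * 2 ^ rk M * a ^ (k + k - 2) := by ring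
        _ < a ^ 2 * a ^ (k + k - 2) := h2
        _ = a ^ (k + k) := h3
        _ ≤ 2 ^ rk M * S.card := hSlow
    exact Nat.lt_of_mul_lt_mul_left h4
  -- extract a good tuple
  have hGne : (S \ (NIset ∪ Bset)).Nonempty := by
    rw [Finset.nonempty_iff_ne_empty]
    intro hemp
    have hsub : S ⊆ NIset ∪ Bset := by
      intro f hf
      by_contra hnot
      have : f ∈ S \ (NIset ∪ Bset) := Finset.mem_sdiff.mpr ⟨hf, hnot⟩
      rw [hemp] at this
      exact absurd this (Finset.notMem_empty f)
    have := Finset.card_le_card hsub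
    have hcu := Finset.card_union_le NIset Bset
    omega
  obtain ⟨f, hfG⟩ := hGne
  rw [Finset.mem_sdiff, Finset.mem_union] at hfG
  obtain ⟨hfS, hfnot⟩ := hfG
  push_neg at hfnot
  obtain ⟨hfNI, hfB⟩ := hfnot
  have hfW : f ∈ Fintype.piFinset (fun _ : Fin k ⊕ Fin k => M) :=
    (Finset.mem_filter.mp hfS).1
  have hfsum : ∑ x, f x = 0 := (Finset.mem_filter.mp hfS).2
  have hfM : ∀ x, f x ∈ M := Fintype.mem_piFinset.mp hfW
  have hinj : Function.Injective f := by
    by_contra hni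
    exact hfNI (Finset.mem_filter.mpr ⟨hfS, hni⟩)
  have hgood : ∀ A : Finset (Fin k ⊕ Fin k), A.Nonempty → A ≠ univ →
      ∑ x ∈ A, f x ≠ 0 := by
    intro A hAne hAu hAsum
    apply hfB
    rw [hB]
    apply Finset.mem_biUnion.mpr
    refine ⟨A, ?_, Finset.mem_filter.mpr ⟨hfS, hAsum⟩⟩
    rw [hℬ, Finset.mem_filter]
    exact ⟨Finset.mem_powerset.mpr (Finset.subset_univ _), hAne, hAu⟩
  -- build the circuit
  haveI : Nonempty (Fin k ⊕ Fin k) := ⟨Sum.inl ⟨0, by omega⟩⟩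
  refine ⟨univ.image f, ?_, ⟨?_, ?_, ?_, ?_⟩, ?_⟩
  · intro y hy
    obtain ⟨x, -, rfl⟩ := Finset.mem_image.mp hy
    exact hfM x
  · exact (Finset.univ_nonempty).image f
  · intro hmem
    obtain ⟨x, -, hx⟩ := Finset.mem_image.mp hmem
    exact h0 (hx ▸ hfM x)
  · rw [Finset.sum_image (fun x _ y _ h => hinj h)]
    exact hfsum
  · intro D hD hDne hDsum
    set A := univ.filter (fun x => f x ∈ D) with hA
    have hAim : A.image f = D := by
      ext y
      constructor
      · intro hy
        obtain ⟨x, hx, rfl⟩ := Finset.mem_image.mp hy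
        exact (Finset.mem_filter.mp hx).2
      · intro hy
        have hyC := hD hy
        obtain ⟨x, -, rfl⟩ := Finset.mem_image.mp hyC
        exact Finset.mem_image_of_mem f
          (Finset.mem_filter.mpr ⟨Finset.mem_univ x, hy⟩)
    have hAsum : ∑ x ∈ A, f x = 0 := by
      have hsi : ∑ y ∈ A.image f, (fun y => y) y = ∑ x ∈ A, (fun y => y) (f x) :=
        Finset.sum_image (g := f) (f := fun y => y) (s := A)
          (fun x _ y _ h => hinj h)
      simp only at hsi
      rw [hAim] at hsi
      rw [← hsi]
      exact hDsum
    have hAne : A.Nonempty := by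
      obtain ⟨y, hy⟩ := hDne
      rw [← hAim] at hy
      obtain ⟨x, hx, -⟩ := Finset.mem_image.mp hy
      exact ⟨x, hx⟩
    by_cases hAuniv : A = univ
    · rw [← hAim, hAuniv]
    · exact absurd hAsum (hgood A hAne hAuniv)
  · rw [Finset.card_image_of_injective _ hinj, Finset.card_univ]
    simp [Fintype.card_sum]


lemma numeric_main {ρ : ℕ} (hρ : 48 ≤ ρ) :
    (4 * (ρ / 8) ^ 2 + 2 ^ (ρ / 8 + ρ / 8)) * (ρ + 1) ^ 2 ≤ 2304 * 2 ^ ρ := by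
  set k := ρ / 8 with hk
  have hq : 4 * (ρ / 4) + 4 ≤ 2 ^ (ρ / 4) := q_helper (ρ / 4) (by omega)
  have h2 : ρ + 1 ≤ 2 ^ (ρ / 4) := by omega
  have h1 : k ^ 2 ≤ 2 ^ (k + k) := by
    have hlt := Nat.lt_two_pow_self (n := k)
    calc k ^ 2 = k * k := sq k
      _ ≤ 2 ^ k * 2 ^ k := Nat.mul_le_mul hlt.le hlt.le
      _ = 2 ^ (k + k) := (pow_add 2 k k).symm
  have h3 : 4 * k ^ 2 + 2 ^ (k + k) ≤ 2 ^ (k + k + 3) := by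
    have h8 : 2 ^ (k + k + 3) = 8 * 2 ^ (k + k) := by ring
    omega
  calc (4 * k ^ 2 + 2 ^ (k + k)) * (ρ + 1) ^ 2
      ≤ 2 ^ (k + k + 3) * (2 ^ (ρ / 4)) ^ 2 :=
        Nat.mul_le_mul h3 (Nat.pow_le_pow_left h2 2)
    _ = 2 ^ (k + k + 3 + ρ / 4 * 2) := by rw [← pow_mul, ← pow_add]
    _ ≤ 2 ^ ρ := Nat.pow_le_pow_right (by norm_num) (by omega)
    _ ≤ 2304 * 2 ^ ρ := Nat.le_mul_of_pos_left _ (by norm_num)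

lemma rhosq_le {ρ : ℕ} (hρ : 48 ≤ ρ) : (ρ + 1) ^ 2 ≤ 2 ^ ρ := by
  have hq : 4 * (ρ / 4) + 4 ≤ 2 ^ (ρ / 4) := q_helper (ρ / 4) (by omega)
  have h2 : ρ + 1 ≤ 2 ^ (ρ / 4) := by omega
  calc (ρ + 1) ^ 2 ≤ (2 ^ (ρ / 4)) ^ 2 := Nat.pow_le_pow_left h2 2
    _ = 2 ^ (ρ / 4 * 2) := by rw [← pow_mul]
    _ ≤ 2 ^ ρ := Nat.pow_le_pow_right (by norm_num) (by omega)

/-- The main inductive bound, in natural-number form. -/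
lemma main_bound : ∀ (a : ℕ) (M : Finset (Fin n → ZMod 2)), M.card = a →
    (0 : Fin n → ZMod 2) ∉ M → ∑ x ∈ M, x = 0 →
    ∃ 𝒞, IsCircuitPartition M 𝒞 ∧ 𝒞.card * (rk M + 1) ≤ 16 * 2 ^ rk M + 8 * M.card := by
  intro a
  induction a using Nat.strong_induction_on with
  | _ a IH =>
    intro M hcard h0 hsum
    by_cases hsmall : M.card * (rk M + 1) ≤ 48 * 2 ^ rk M
    · -- small case: the trivial bound suffices
      obtain ⟨𝒞, hpart, hcount⟩ := exists_partition M.card M rfl h0 hsum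
      refine ⟨𝒞, hpart, ?_⟩
      have h1 : 3 * (𝒞.card * (rk M + 1)) ≤ 3 * (16 * 2 ^ rk M) := by
        calc 3 * (𝒞.card * (rk M + 1)) = (3 * 𝒞.card) * (rk M + 1) := by ring
          _ ≤ M.card * (rk M + 1) := Nat.mul_le_mul_right _ hcount
          _ ≤ 48 * 2 ^ rk M := hsmall
          _ = 3 * (16 * 2 ^ rk M) := by ring
      have h2 := Nat.le_of_mul_le_mul_left h1 (by norm_num)
      omega
    · push_neg at hsmall
      have haM : M.card ≤ 2 ^ rk M := card_M_le_two_pow_rk M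
      have hρ48 : 48 ≤ rk M := by
        by_contra hlt
        push_neg at hlt
        have h48 : rk M + 1 ≤ 48 := by omega
        have : M.card * (rk M + 1) ≤ 2 ^ rk M * 48 := Nat.mul_le_mul haM h48
        omega
      have h2pos : 0 < 2 ^ rk M := Nat.pow_pos (by norm_num)
      have hapos : 0 < M.card := by
        rcases Nat.eq_zero_or_pos M.card with h | h
        · rw [h] at hsmall; omega
        · exact h
      set k := rk M / 8 with hkdef
      have hk2 : 2 ≤ k := by omega
      -- the counting condition
      have hcond : (4 * k ^ 2 + 2 ^ (k + k)) * 2 ^ rk M < M.card ^ 2 := by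
        have hnum := numeric_main hρ48
        have hstrict : (48 * 2 ^ rk M) ^ 2 < (M.card * (rk M + 1)) ^ 2 :=
          Nat.pow_lt_pow_left hsmall (by norm_num)
        have hchain : (rk M + 1) ^ 2 * ((4 * k ^ 2 + 2 ^ (k + k)) * 2 ^ rk M)
            < (rk M + 1) ^ 2 * M.card ^ 2 := by
          calc (rk M + 1) ^ 2 * ((4 * k ^ 2 + 2 ^ (k + k)) * 2 ^ rk M)
              = ((4 * k ^ 2 + 2 ^ (k + k)) * (rk M + 1) ^ 2) * 2 ^ rk M := by ring
            _ ≤ (2304 * 2 ^ rk M) * 2 ^ rk M := Nat.mul_le_mul_right _ hnum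
            _ = (48 * 2 ^ rk M) ^ 2 := by ring
            _ < (M.card * (rk M + 1)) ^ 2 := hstrict
            _ = (rk M + 1) ^ 2 * M.card ^ 2 := by ring
        exact Nat.lt_of_mul_lt_mul_left hchain
      obtain ⟨C, hCM, hCcirc, hCcard⟩ :=
        exists_big_circuit h0 (fun T hT => card_le_two_pow_rk hT) k hk2 hcond
      have hjlea : k + k ≤ M.card := hCcard ▸ Finset.card_le_card hCM
      have hM'card : (M \ C).card = M.card - (k + k) := by
        rw [Finset.card_sdiff_of_subset hCM, hCcard]
      have hlt : (M \ C).card < a := by omega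
      have h0' : (0 : Fin n → ZMod 2) ∉ M \ C :=
        fun h => h0 (Finset.mem_sdiff.mp h).1
      have hsum' : ∑ x ∈ M \ C, x = 0 := by
        have h := Finset.sum_sdiff hCM (f := fun x => x)
        rw [hCcirc.2.2.1, hsum] at h
        simpa using h
      obtain ⟨𝒞', hpart', hbound'⟩ := IH _ hlt (M \ C) rfl h0' hsum'
      refine ⟨insert C 𝒞', insert_partition hCcirc hCM hpart', ?_⟩
      have hins : (insert C 𝒞').card ≤ 𝒞'.card + 1 := Finset.card_insert_le _ _
      have hρ'le : rk (M \ C) ≤ rk M := rk_mono (Finset.sdiff_subset)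
      have hkey : 𝒞'.card * (rk M + 1) + (rk M + 1) ≤ 16 * 2 ^ rk M + 8 * M.card := by
        rcases eq_or_lt_of_le hρ'le with heq | hltρ
        · -- rank did not drop
          rw [heq, hM'card] at hbound'
          have h8j : rk M + 1 ≤ 8 * (k + k) := by omega
          omega
        · -- rank dropped
          have ha' : (M \ C).card ≤ 2 ^ rk (M \ C) := card_M_le_two_pow_rk _
          have hc24 : 𝒞'.card * (rk (M \ C) + 1) ≤ 24 * 2 ^ rk (M \ C) := by omega
          obtain ⟨ρ₀, hρ₀⟩ : ∃ ρ₀, rk M = ρ₀ + 1 := ⟨rk M - 1, by omega⟩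
          have hmono : 2 ^ rk (M \ C) * (ρ₀ + 1) ≤ 2 ^ ρ₀ * (rk (M \ C) + 1) :=
            mono2 (by omega)
          have hX : 𝒞'.card * (rk M + 1) ≤ 16 * 2 ^ rk M := by
            have hstep : (𝒞'.card * (rk M + 1)) * ((rk (M \ C) + 1) * (ρ₀ + 1))
                ≤ (32 * 2 ^ ρ₀ * (ρ₀ + 1)) * (rk (M \ C) + 1) := by
              calc (𝒞'.card * (rk M + 1)) * ((rk (M \ C) + 1) * (ρ₀ + 1))
                  = (𝒞'.card * (rk (M \ C) + 1)) * ((rk M + 1) * (ρ₀ + 1)) := by ring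
                _ ≤ (24 * 2 ^ rk (M \ C)) * ((rk M + 1) * (ρ₀ + 1)) :=
                    Nat.mul_le_mul_right _ hc24
                _ = (24 * (rk M + 1)) * (2 ^ rk (M \ C) * (ρ₀ + 1)) := by ring
                _ ≤ (24 * (rk M + 1)) * (2 ^ ρ₀ * (rk (M \ C) + 1)) :=
                    Nat.mul_le_mul_left _ hmono
                _ = (24 * (ρ₀ + 2) * 2 ^ ρ₀) * (rk (M \ C) + 1) := by rw [hρ₀]; ring
                _ ≤ (32 * (ρ₀ + 1) * 2 ^ ρ₀) * (rk (M \ C) + 1) := by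
                    have : 24 * (ρ₀ + 2) ≤ 32 * (ρ₀ + 1) := by omega
                    exact Nat.mul_le_mul_right _ (Nat.mul_le_mul_right _ this)
                _ = (32 * 2 ^ ρ₀ * (ρ₀ + 1)) * (rk (M \ C) + 1) := by ring
            have hstep2 : (𝒞'.card * (rk M + 1)) * (rk (M \ C) + 1) * (ρ₀ + 1)
                ≤ (32 * 2 ^ ρ₀) * (rk (M \ C) + 1) * (ρ₀ + 1) := by
              calc (𝒞'.card * (rk M + 1)) * (rk (M \ C) + 1) * (ρ₀ + 1)
                  = (𝒞'.card * (rk M + 1)) * ((rk (M \ C) + 1) * (ρ₀ + 1)) := by ring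
                _ ≤ (32 * 2 ^ ρ₀ * (ρ₀ + 1)) * (rk (M \ C) + 1) := hstep
                _ = (32 * 2 ^ ρ₀) * (rk (M \ C) + 1) * (ρ₀ + 1) := by ring
            have h1 := Nat.le_of_mul_le_mul_right hstep2 (by omega)
            have h2 := Nat.le_of_mul_le_mul_right h1 (by omega)
            calc 𝒞'.card * (rk M + 1) ≤ 32 * 2 ^ ρ₀ := h2
              _ = 16 * 2 ^ (ρ₀ + 1) := by ring
              _ = 16 * 2 ^ rk M := by rw [hρ₀]
          have hρa : rk M + 1 ≤ 8 * M.card := by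
            have hsq := rhosq_le hρ48
            have : 48 * (rk M + 1) ^ 2 ≤ 48 * 2 ^ rk M := Nat.mul_le_mul_left _ hsq
            nlinarith
          omega
      calc (insert C 𝒞').card * (rk M + 1) ≤ (𝒞'.card + 1) * (rk M + 1) :=
            Nat.mul_le_mul_right _ hins
        _ = 𝒞'.card * (rk M + 1) + (rk M + 1) := by ring
        _ ≤ 16 * 2 ^ rk M + 8 * M.card := hkey


end CircuitProof

/-- Every Eulerian binary matroid can be partitioned into
`O(2^{rank M}/(rank M + 1))` circuits. -/
theorem circuit_decomposition_big_O :
    ∃ K : ℝ, 0 < K ∧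
      ∀ (n : ℕ) (M : Finset (Fin n → ZMod 2)),
        (0 : Fin n → ZMod 2) ∉ M → ∑ x ∈ M, x = 0 →
        ∃ 𝒞 : Finset (Finset (Fin n → ZMod 2)), IsCircuitPartition M 𝒞 ∧
          (𝒞.card : ℝ) ≤ K * 2 ^ rk M / (rk M + 1) := by
  refine ⟨24, by norm_num, ?_⟩
  intro n M h0 hsum
  obtain ⟨𝒞, hpart, hbound⟩ := CircuitProof.main_bound M.card M rfl h0 hsum
  refine ⟨𝒞, hpart, ?_⟩
  have haM : M.card ≤ 2 ^ rk M := CircuitProof.card_M_le_two_pow_rk M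
  have h24 : 𝒞.card * (rk M + 1) ≤ 24 * 2 ^ rk M := by omega
  rw [le_div_iff₀ (by positivity)]
  calc (𝒞.card : ℝ) * ((rk M : ℝ) + 1) = ((𝒞.card * (rk M + 1) : ℕ) : ℝ) := by push_cast; ring
    _ ≤ ((24 * 2 ^ rk M : ℕ) : ℝ) := by exact_mod_cast h24
    _ = 24 * 2 ^ rk M := by push_cast; ring
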